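/- arXiv:1302.3514 — 2 statements merged into one kernel-verified Lean document; each statement's English description precedes it below -/
import Mathlib

section
/- Let a, a' > 0. If W' is a random variable with distribution β²_{a+a', a'} independent of X with distribution β¹_{a, a'}, then the random variable 1/(1 + W'·X) has distribution β¹_{a', a}. -/
open MeasureTheory ProbabilityTheory Real Set Filter Topology

noncomputable def gammaDens (p σ y : ℝ) : ℝ :=
  if 0 < y then σ ^ p / Real.Gamma p * Real.exp (-(σ * y)) * y ^ (p - 1) else 0

noncomputable def gammaM (p σ : ℝ) : Measure ℝ :=
  MeasureTheory.volume.withDensity fun y => ENNReal.ofReal (gammaDens p σ y)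

noncomputable def beta1Dens (p q x : ℝ) : ℝ :=
  if 0 < x ∧ x < 1 then
    Real.Gamma (p + q) / (Real.Gamma p * Real.Gamma q) * x ^ (p - 1) * (1 - x) ^ (q - 1)
  else 0

noncomputable def beta1 (p q : ℝ) : Measure ℝ :=
  MeasureTheory.volume.withDensity fun x => ENNReal.ofReal (beta1Dens p q x)

noncomputable def beta2Dens (p q y : ℝ) : ℝ :=
  if 0 < y then
    Real.Gamma (p + q) / (Real.Gamma p * Real.Gamma q) * y ^ (p - 1) * (1 + y) ^ (-(p + q))
  else 0

noncomputable def beta2 (p q : ℝ) : Measure ℝ :=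
  MeasureTheory.volume.withDensity fun y => ENNReal.ofReal (beta2Dens p q y)

/-- Pochhammer (rising factorial) symbol `(a)_n`. -/
noncomputable def poch (a : ℝ) (n : ℕ) : ℝ := ∏ i ∈ Finset.range n, (a + (i : ℝ))

/-- Gauss hypergeometric function `₂F₁(a,b;c;x)`. -/
noncomputable def F21 (a b c x : ℝ) : ℝ :=
  ∑' n : ℕ, poch a n * poch b n / ((n.factorial : ℝ) * poch c n) * x ^ n

/-- Generalized hypergeometric `₃F₂(a₁,a₂,a₃;b₁,b₂;1)` at unit argument. -/
noncomputable def F32one (a1 a2 a3 b1 b2 : ℝ) : ℝ :=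
  ∑' n : ℕ, poch a1 n * poch a2 n * poch a3 n /
    ((n.factorial : ℝ) * poch b1 n * poch b2 n)

/-- Normalizing constant of the real beta-hypergeometric distribution. -/
noncomputable def Cbh (a a' b : ℝ) : ℝ :=
  Real.Gamma (a + b) / (Real.Gamma a * Real.Gamma b * F32one a a b (a + b) (a + a'))

noncomputable def bhDens (a a' b x : ℝ) : ℝ :=
  if 0 < x ∧ x < 1 then
    Cbh a a' b * x ^ (a - 1) * (1 - x) ^ (b - 1) * F21 a b (a + a') x
  else 0

/-- The real beta-hypergeometric distribution `μ_{a,a',b}`. -/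
noncomputable def bhMeasure (a a' b : ℝ) : Measure ℝ :=
  MeasureTheory.volume.withDensity fun x => ENNReal.ofReal (bhDens a a' b x)

section Aux

lemma lintegral_image_1d {s : Set ℝ} {f f' : ℝ → ℝ} (hs : MeasurableSet s)
    (hf' : ∀ x ∈ s, HasDerivWithinAt f (f' x) s x) (hf : Set.InjOn f s) (g : ℝ → ENNReal) :
    ∫⁻ x in f '' s, g x = ∫⁻ x in s, ENNReal.ofReal |f' x| * g (f x) := by
  simpa only [ContinuousLinearMap.det_toSpanSingleton] using
    lintegral_image_eq_lintegral_abs_det_fderiv_mul volume hs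
      (fun x hx => (hf' x hx).hasFDerivWithinAt) hf g

lemma image1 (x : ℝ) (hx : x ∈ Set.Ioo (0:ℝ) 1) :
    (fun v => (1-v)/(v*x)) '' (Set.Ioo 0 1) = Set.Ioi 0 := by
  obtain ⟨hx0, hx1⟩ := hx
  ext w
  simp only [Set.mem_image, Set.mem_Ioo, Set.mem_Ioi]
  constructor
  · rintro ⟨v, ⟨hv0, hv1⟩, rfl⟩
    have : (0:ℝ) < 1 - v := by linarith
    positivity
  · intro hw
    refine ⟨1/(1+w*x), ⟨by positivity, ?_⟩, ?_⟩
    · rw [div_lt_one (by positivity)]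
      nlinarith
    · have h1 : (0:ℝ) < 1 + w * x := by positivity
      field_simp
      ring

lemma image2 (v : ℝ) (hv : v ∈ Set.Ioo (0:ℝ) 1) :
    (fun s => (1-v)*(1-s)/(1-v+v*s)) '' (Set.Ioo 0 1) = Set.Ioo 0 1 := by
  obtain ⟨hv0, hv1⟩ := hv
  have h1v : (0:ℝ) < 1 - v := by linarith
  ext x
  simp only [Set.mem_image, Set.mem_Ioo]
  constructor
  · rintro ⟨s, ⟨hs0, hs1⟩, rfl⟩
    have h1s : (0:ℝ) < 1 - s := by linarith
    have hD : (0:ℝ) < 1 - v + v * s := by nlinarith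
    constructor
    · positivity
    · rw [div_lt_one hD]
      nlinarith
  · rintro ⟨hx0, hx1⟩
    have h1x : (0:ℝ) < 1 - x := by linarith
    have hE : (0:ℝ) < 1 - v + v * x := by nlinarith
    refine ⟨(1-x)*(1-v)/(1-v+v*x), ⟨by positivity, ?_⟩, ?_⟩
    · rw [div_lt_one hE]
      nlinarith
    · have hD' : (1:ℝ) - v + v * ((1-x)*(1-v)/(1-v+v*x)) = (1-v)/(1-v+v*x) := by
        field_simp
        ring
      rw [hD', div_eq_iff (by positivity : ((1:ℝ)-v)/(1-v+v*x) ≠ 0)]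
      field_simp
      ring

lemma dens1 (a a' v x : ℝ) (ha : 0 < a) (ha' : 0 < a')
    (hv : v ∈ Set.Ioo (0:ℝ) 1) (hx : x ∈ Set.Ioo (0:ℝ) 1) :
    (1/(x*v^2)) * beta2Dens (a+a') a' ((1-v)/(v*x)) =
    Real.Gamma (a+a'+a') / (Real.Gamma (a+a') * Real.Gamma a') *
      (1-v)^(a+a'-1) * v^(a'-1) * x^a' * (1-v+v*x)^(-(a+a'+a')) := by
  obtain ⟨hv0, hv1⟩ := hv
  obtain ⟨hx0, hx1⟩ := hx
  have h1v : (0:ℝ) < 1 - v := by linarith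
  have hD : (0:ℝ) < 1 - v + v * x := by nlinarith
  have hy : (0:ℝ) < (1-v)/(v*x) := by positivity
  have hG1 : 0 < Real.Gamma (a+a') := Real.Gamma_pos_of_pos (by linarith)
  have hG2 : 0 < Real.Gamma a' := Real.Gamma_pos_of_pos ha'
  have hG3 : 0 < Real.Gamma (a+a'+a') := Real.Gamma_pos_of_pos (by linarith)
  rw [beta2Dens, if_pos hy]
  have h4 : 1 + (1-v)/(v*x) = (1-v+v*x)/(v*x) := by field_simp; ring
  rw [h4]
  have hL : 0 < (1/(x*v^2)) * (Real.Gamma ((a+a')+a') / (Real.Gamma (a+a') * Real.Gamma a') *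
      ((1-v)/(v*x)) ^ ((a+a') - 1) * ((1-v+v*x)/(v*x)) ^ (-((a+a')+a'))) := by positivity
  have hR : 0 < Real.Gamma (a+a'+a') / (Real.Gamma (a+a') * Real.Gamma a') *
      (1-v)^(a+a'-1) * v^(a'-1) * x^a' * (1-v+v*x)^(-(a+a'+a')) := by positivity
  have hv0' : v ≠ 0 := hv0.ne'
  have hx0' : x ≠ 0 := hx0.ne'
  have h1v' : (1:ℝ) - v ≠ 0 := h1v.ne'
  have hD' : (1:ℝ) - v + v * x ≠ 0 := hD.ne'
  have hG1' : Real.Gamma (a+a') ≠ 0 := hG1.ne'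
  have hG2' : Real.Gamma a' ≠ 0 := hG2.ne'
  have hG3' : Real.Gamma (a+a'+a') ≠ 0 := hG3.ne'
  have hxv2 : x * v ^ 2 ≠ 0 := by positivity
  have hvx : v * x ≠ 0 := by positivity
  have hyD : (0:ℝ) < (1-v+v*x)/(v*x) := by positivity
  have e1 : ((1-v)/(v*x)) ^ (a+a'-1) ≠ 0 := (Real.rpow_pos_of_pos hy _).ne'
  have e2 : ((1-v+v*x)/(v*x)) ^ (-(a+a'+a')) ≠ 0 := (Real.rpow_pos_of_pos hyD _).ne'
  have e3 : (1-v) ^ (a+a'-1) ≠ 0 := (Real.rpow_pos_of_pos h1v _).ne'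
  have e4 : v ^ (a'-1) ≠ 0 := (Real.rpow_pos_of_pos hv0 _).ne'
  have e5 : x ^ a' ≠ 0 := (Real.rpow_pos_of_pos hx0 _).ne'
  have e6 : (1-v+v*x) ^ (-(a+a'+a')) ≠ 0 := (Real.rpow_pos_of_pos hD _).ne'
  apply Real.log_injOn_pos (Set.mem_Ioi.mpr hL) (Set.mem_Ioi.mpr hR)
  simp only [Real.log_mul, Real.log_div, Real.log_rpow, Real.log_pow, Real.log_one,
    hv0, hx0, h1v, hD, hy, hyD, ne_eq, mul_ne_zero_iff, div_ne_zero_iff, not_false_eq_true,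
    hv0', hx0', h1v', hD', hG1', hG2', hG3', hxv2, hvx, e1, e2, e3, e4, e5, e6,
    one_ne_zero, and_self, and_true, true_and, pow_ne_zero]
  ring

lemma dens2 (a a' v s : ℝ) (hv : v ∈ Set.Ioo (0:ℝ) 1) (hs : s ∈ Set.Ioo (0:ℝ) 1) :
    ((1-v)/(1-v+v*s)^2) *
      (((1-v)*(1-s)/(1-v+v*s))^(a+a'-1) * (s/(1-v+v*s))^(a'-1) *
        ((1-v)/(1-v+v*s))^(-(a+a'+a'))) =
    (1-v)^(-a') * (s^(a'-1) * (1-s)^(a+a'-1)) := by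
  obtain ⟨hv0, hv1⟩ := hv
  obtain ⟨hs0, hs1⟩ := hs
  have h1v : (0:ℝ) < 1 - v := by linarith
  have h1s : (0:ℝ) < 1 - s := by linarith
  have hD : (0:ℝ) < 1 - v + v * s := by nlinarith
  have hnum : (0:ℝ) < (1-v)*(1-s) := by positivity
  have hL : 0 < ((1-v)/(1-v+v*s)^2) *
      (((1-v)*(1-s)/(1-v+v*s))^(a+a'-1) * (s/(1-v+v*s))^(a'-1) *
        ((1-v)/(1-v+v*s))^(-(a+a'+a'))) := by positivity
  have hR : 0 < (1-v)^(-a') * (s^(a'-1) * (1-s)^(a+a'-1)) := by positivity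
  have hv0' : v ≠ 0 := hv0.ne'
  have hs0' : s ≠ 0 := hs0.ne'
  have h1v' : (1:ℝ) - v ≠ 0 := h1v.ne'
  have h1s' : (1:ℝ) - s ≠ 0 := h1s.ne'
  have hD' : (1:ℝ) - v + v * s ≠ 0 := hD.ne'
  have hD2' : ((1:ℝ) - v + v * s)^2 ≠ 0 := by positivity
  have hnum' : ((1:ℝ)-v)*(1-s) ≠ 0 := hnum.ne'
  have hq1 : (0:ℝ) < (1-v)*(1-s)/(1-v+v*s) := by positivity
  have hq2 : (0:ℝ) < s/(1-v+v*s) := by positivity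
  have hq3 : (0:ℝ) < (1-v)/(1-v+v*s) := by positivity
  have e1 : ((1-v)*(1-s)/(1-v+v*s))^(a+a'-1) ≠ 0 := (Real.rpow_pos_of_pos hq1 _).ne'
  have e2 : (s/(1-v+v*s))^(a'-1) ≠ 0 := (Real.rpow_pos_of_pos hq2 _).ne'
  have e3 : ((1-v)/(1-v+v*s))^(-(a+a'+a')) ≠ 0 := (Real.rpow_pos_of_pos hq3 _).ne'
  have e4 : (1-v)^(-a') ≠ 0 := (Real.rpow_pos_of_pos h1v _).ne'
  have e5 : s^(a'-1) ≠ 0 := (Real.rpow_pos_of_pos hs0 _).ne'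
  have e6 : (1-s)^(a+a'-1) ≠ 0 := (Real.rpow_pos_of_pos h1s _).ne'
  apply Real.log_injOn_pos (Set.mem_Ioi.mpr hL) (Set.mem_Ioi.mpr hR)
  simp only [Real.log_mul, Real.log_div, Real.log_rpow, Real.log_pow, Real.log_one,
    hv0, hs0, h1v, h1s, hD, hq1, hq2, hq3, hnum, ne_eq, mul_ne_zero_iff, div_ne_zero_iff,
    not_false_eq_true, hv0', hs0', h1v', h1s', hD', hD2', hnum', e1, e2, e3, e4, e5, e6,
    one_ne_zero, and_self, and_true, true_and, pow_ne_zero]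
  ring

lemma dens3 (a a' v x : ℝ) (ha : 0 < a) (ha' : 0 < a')
    (hv : v ∈ Set.Ioo (0:ℝ) 1) (hx : x ∈ Set.Ioo (0:ℝ) 1) :
    beta1Dens a a' x * (Real.Gamma (a+a'+a') / (Real.Gamma (a+a') * Real.Gamma a') *
      (1-v)^(a+a'-1) * v^(a'-1) * x^a' * (1-v+v*x)^(-(a+a'+a'))) =
    (Real.Gamma (a+a') / (Real.Gamma a * Real.Gamma a') *
      (Real.Gamma (a+a'+a') / (Real.Gamma (a+a') * Real.Gamma a')) *
      (1-v)^(a+a'-1) * v^(a'-1)) *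
      (x^(a+a'-1) * (1-x)^(a'-1) * (1-v+v*x)^(-(a+a'+a'))) := by
  obtain ⟨hv0, hv1⟩ := hv
  obtain ⟨hx0, hx1⟩ := hx
  rw [beta1Dens, if_pos ⟨hx0, hx1⟩]
  rw [show x^(a+a'-1) = x^(a-1) * x^a' by
    rw [← Real.rpow_add hx0]; ring_nf]
  ring

lemma dens4 (a a' v : ℝ) (ha : 0 < a) (ha' : 0 < a') (hv : v ∈ Set.Ioo (0:ℝ) 1) :
    (Real.Gamma (a+a') / (Real.Gamma a * Real.Gamma a') *
      (Real.Gamma (a+a'+a') / (Real.Gamma (a+a') * Real.Gamma a')) *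
      (1-v)^(a+a'-1) * v^(a'-1)) *
      ((1-v)^(-a') * (Real.Gamma a' * Real.Gamma (a+a') / Real.Gamma (a' + (a+a')))) =
    beta1Dens a' a v := by
  obtain ⟨hv0, hv1⟩ := hv
  have h1v : (0:ℝ) < 1 - v := by linarith
  have hG1 : 0 < Real.Gamma (a+a') := Real.Gamma_pos_of_pos (by linarith)
  have hG2 : 0 < Real.Gamma a' := Real.Gamma_pos_of_pos ha'
  have hG3 : 0 < Real.Gamma a := Real.Gamma_pos_of_pos ha
  have hG4 : 0 < Real.Gamma (a+a'+a') := Real.Gamma_pos_of_pos (by linarith)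
  rw [beta1Dens, if_pos ⟨hv0, hv1⟩]
  rw [show a' + (a+a') = a+a'+a' by ring, show Real.Gamma (a'+a) = Real.Gamma (a+a') by
    rw [add_comm]]
  rw [show (1-v)^(a-1) = (1-v)^(a+a'-1) * (1-v)^(-a') by
    rw [← Real.rpow_add h1v]; ring_nf]
  field_simp

lemma betaInt (p q : ℝ) (hp : 0 < p) (hq : 0 < q) :
    ∫⁻ s in Set.Ioo (0:ℝ) 1, ENNReal.ofReal (s^(p-1) * (1-s)^(q-1)) =
      ENNReal.ofReal (Real.Gamma p * Real.Gamma q / Real.Gamma (p+q)) := by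
  have hp' : 0 < (p:ℂ).re := by simpa using hp
  have hq' : 0 < (q:ℂ).re := by simpa using hq
  have h1 : Complex.betaIntegral p q =
      ((∫ s in (0:ℝ)..1, s^(p-1) * (1-s)^(q-1)) : ℝ) := by
    rw [Complex.betaIntegral, ← intervalIntegral.integral_ofReal]
    apply intervalIntegral.integral_congr
    intro s hs
    rw [Set.uIcc_of_le zero_le_one] at hs
    obtain ⟨hs0, hs1⟩ := hs
    have h1s : (0:ℝ) ≤ 1 - s := by linarith
    push_cast
    rw [show (p:ℂ) - 1 = ((p - 1 : ℝ) : ℂ) by push_cast; ring,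
      show (q:ℂ) - 1 = ((q - 1 : ℝ) : ℂ) by push_cast; ring,
      show (1:ℂ) - (s:ℂ) = ((1 - s : ℝ) : ℂ) by push_cast; ring,
      ← Complex.ofReal_cpow hs0, ← Complex.ofReal_cpow h1s, ← Complex.ofReal_mul]
  have h2 := Complex.Gamma_mul_Gamma_eq_betaIntegral hp' hq'
  rw [h1] at h2
  rw [← Complex.ofReal_add, Complex.Gamma_ofReal, Complex.Gamma_ofReal, Complex.Gamma_ofReal,
    ← Complex.ofReal_mul, ← Complex.ofReal_mul] at h2
  have hI : Real.Gamma p * Real.Gamma q =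
      Real.Gamma (p+q) * ∫ s in (0:ℝ)..1, s^(p-1) * (1-s)^(q-1) := by
    exact_mod_cast h2
  have hGpq : Real.Gamma (p+q) ≠ 0 := (Real.Gamma_pos_of_pos (by linarith)).ne'
  have hIval : ∫ s in (0:ℝ)..1, s^(p-1) * (1-s)^(q-1)
      = Real.Gamma p * Real.Gamma q / Real.Gamma (p+q) := by
    field_simp at hI ⊢
    linarith [hI]
  have hconv := (Complex.betaIntegral_convergent hp' hq').1
  have hre : IntegrableOn (fun s : ℝ => s^(p-1) * (1-s)^(q-1)) (Set.Ioc 0 1) := by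
    have := hconv.re
    apply this.congr
    filter_upwards [ae_restrict_mem measurableSet_Ioc] with s hs
    obtain ⟨hs0, hs1⟩ := hs
    have h1s : (0:ℝ) ≤ 1 - s := by linarith
    rw [show (p:ℂ) - 1 = ((p - 1 : ℝ) : ℂ) by push_cast; ring,
      show (q:ℂ) - 1 = ((q - 1 : ℝ) : ℂ) by push_cast; ring,
      show (1:ℂ) - (s:ℂ) = ((1 - s : ℝ) : ℂ) by push_cast; ring,
      ← Complex.ofReal_cpow hs0.le, ← Complex.ofReal_cpow h1s, ← Complex.ofReal_mul]
    simp
  have hnn : 0 ≤ᵐ[volume.restrict (Set.Ioc (0:ℝ) 1)] fun s : ℝ => s^(p-1) * (1-s)^(q-1) := by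
    filter_upwards [ae_restrict_mem measurableSet_Ioc] with s hs
    exact mul_nonneg (Real.rpow_nonneg hs.1.le _) (Real.rpow_nonneg (by linarith [hs.2]) _)
  rw [setLIntegral_congr Ioo_ae_eq_Ioc, ← ofReal_integral_eq_lintegral_ofReal hre hnn,
    ← intervalIntegral.integral_of_le zero_le_one, hIval]

lemma aux1 (a a' x : ℝ) (ha : 0 < a) (ha' : 0 < a') (hx : x ∈ Set.Ioo (0:ℝ) 1)
    (g : ℝ → ENNReal) :
    ∫⁻ w, ENNReal.ofReal (beta2Dens (a+a') a' w) * g (1/(1+w*x)) =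
    ∫⁻ v in Set.Ioo (0:ℝ) 1,
      ENNReal.ofReal (Real.Gamma (a+a'+a') / (Real.Gamma (a+a') * Real.Gamma a') *
        (1-v)^(a+a'-1) * v^(a'-1) * x^a' * (1-v+v*x)^(-(a+a'+a'))) * g v := by
  obtain ⟨hx0, hx1⟩ := hx
  have step1 : ∫⁻ w, ENNReal.ofReal (beta2Dens (a+a') a' w) * g (1/(1+w*x)) =
      ∫⁻ w in Set.Ioi 0, ENNReal.ofReal (beta2Dens (a+a') a' w) * g (1/(1+w*x)) := by
    rw [← lintegral_indicator measurableSet_Ioi]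
    apply lintegral_congr
    intro w
    rw [Set.indicator_apply]
    split_ifs with h
    · rfl
    · rw [beta2Dens, if_neg (by simpa using h)]
      simp
  rw [step1, ← image1 x ⟨hx0, hx1⟩]
  have hderiv : ∀ v ∈ Set.Ioo (0:ℝ) 1,
      HasDerivWithinAt (fun v => (1-v)/(v*x)) (-(1/(x*v^2))) (Set.Ioo 0 1) v := by
    intro v hv
    obtain ⟨hv0, hv1⟩ := hv
    have h1 : HasDerivAt (fun v : ℝ => 1 - v) (-1) v := by
      simpa using (hasDerivAt_id v).const_sub 1
    have h2 : HasDerivAt (fun v : ℝ => v * x) x v := by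
      simpa using (hasDerivAt_id v).mul_const x
    have h3 := h1.div h2 (by positivity)
    refine h3.hasDerivWithinAt.congr_deriv ?_
    field_simp
    ring
  have hinj : Set.InjOn (fun v => (1-v)/(v*x)) (Set.Ioo 0 1) := by
    intro v1 h1 v2 h2 heq
    obtain ⟨a1, b1⟩ := h1
    obtain ⟨a2, b2⟩ := h2
    simp only at heq
    rw [div_eq_div_iff (mul_pos a1 hx0).ne' (mul_pos a2 hx0).ne'] at heq
    have h : (v2 - v1) * x = 0 := by linear_combination heq
    rcases mul_eq_zero.mp h with h' | h'
    · linarith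
    · exact absurd h' hx0.ne'
  rw [lintegral_image_1d measurableSet_Ioo hderiv hinj]
  apply setLIntegral_congr_fun measurableSet_Ioo
  intro v hv
  obtain ⟨hv0, hv1⟩ := hv
  have h1v : (0:ℝ) < 1 - v := by linarith
  have harg : 1/(1 + (1-v)/(v*x) * x) = v := by
    rw [show 1 + (1-v)/(v*x) * x = 1/v by field_simp; ring]
    simp
  have habs : |(-(1/(x*v^2)))| = 1/(x*v^2) := by
    rw [abs_neg, abs_of_pos (by positivity)]
  simp only [harg, habs]
  rw [← mul_assoc, ← ENNReal.ofReal_mul (by positivity),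
    dens1 a a' v x ha ha' ⟨hv0, hv1⟩ ⟨hx0, hx1⟩]

lemma aux2 (a a' v : ℝ) (hv : v ∈ Set.Ioo (0:ℝ) 1) :
    ∫⁻ x in Set.Ioo (0:ℝ) 1,
      ENNReal.ofReal (x^(a+a'-1) * (1-x)^(a'-1) * (1-v+v*x)^(-(a+a'+a'))) =
    ENNReal.ofReal ((1-v)^(-a')) *
      ∫⁻ s in Set.Ioo (0:ℝ) 1, ENNReal.ofReal (s^(a'-1) * (1-s)^(a+a'-1)) := by
  obtain ⟨hv0, hv1⟩ := hv
  have h1v : (0:ℝ) < 1 - v := by linarith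
  have hderiv : ∀ s ∈ Set.Ioo (0:ℝ) 1,
      HasDerivWithinAt (fun s => (1-v)*(1-s)/(1-v+v*s))
        (-((1-v)/(1-v+v*s)^2)) (Set.Ioo 0 1) s := by
    intro s hs
    obtain ⟨hs0, hs1⟩ := hs
    have hD : (0:ℝ) < 1 - v + v * s := by nlinarith
    have h1 : HasDerivAt (fun s : ℝ => (1-v)*(1-s)) (-(1-v)) s := by
      simpa using ((hasDerivAt_id s).const_sub 1).const_mul (1-v)
    have h2 : HasDerivAt (fun s : ℝ => 1-v+v*s) v s := by
      simpa using ((hasDerivAt_id s).const_mul v).const_add (1-v)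
    have h3 := h1.div h2 hD.ne'
    refine h3.hasDerivWithinAt.congr_deriv ?_
    field_simp
    ring
  have hinj : Set.InjOn (fun s => (1-v)*(1-s)/(1-v+v*s)) (Set.Ioo 0 1) := by
    intro s1 h1 s2 h2 heq
    obtain ⟨a1, b1⟩ := h1
    obtain ⟨a2, b2⟩ := h2
    have hD1 : (0:ℝ) < 1 - v + v * s1 := by nlinarith
    have hD2 : (0:ℝ) < 1 - v + v * s2 := by nlinarith
    simp only at heq
    rw [div_eq_div_iff hD1.ne' hD2.ne'] at heq
    have h : (s2 - s1) * (1-v) = 0 := by linear_combination heq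
    rcases mul_eq_zero.mp h with h' | h'
    · linarith
    · exact absurd h' h1v.ne'
  conv_lhs => rw [← image2 v ⟨hv0, hv1⟩]
  rw [lintegral_image_1d measurableSet_Ioo hderiv hinj, ← lintegral_const_mul' _ _
    ENNReal.ofReal_ne_top]
  apply setLIntegral_congr_fun measurableSet_Ioo
  intro s hs
  obtain ⟨hs0, hs1⟩ := hs
  have h1s : (0:ℝ) < 1 - s := by linarith
  have hD : (0:ℝ) < 1 - v + v * s := by nlinarith
  have hφ1 : 1 - (1-v)*(1-s)/(1-v+v*s) = s/(1-v+v*s) := by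
    field_simp
    ring
  have hφ2 : 1 - v + v * ((1-v)*(1-s)/(1-v+v*s)) = (1-v)/(1-v+v*s) := by
    field_simp
    ring
  have habs : |(-((1-v)/(1-v+v*s)^2))| = (1-v)/(1-v+v*s)^2 := by
    rw [abs_neg, abs_of_pos (by positivity)]
  simp only [hφ1, hφ2, habs]
  rw [← ENNReal.ofReal_mul (by positivity), ← ENNReal.ofReal_mul (by positivity)]
  rw [← dens2 a a' v s ⟨hv0, hv1⟩ ⟨hs0, hs1⟩]

lemma beta2Dens_meas (p q : ℝ) : Measurable fun y => ENNReal.ofReal (beta2Dens p q y) := by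
  apply Measurable.ennreal_ofReal
  unfold beta2Dens
  apply Measurable.ite (measurableSet_lt measurable_const measurable_id)
  · exact ((measurable_const.mul (measurable_id.pow_const _)).mul
      ((measurable_const.add measurable_id).pow_const _))
  · exact measurable_const

lemma beta1Dens_meas (p q : ℝ) : Measurable fun x => ENNReal.ofReal (beta1Dens p q x) := by
  apply Measurable.ennreal_ofReal
  unfold beta1Dens
  apply Measurable.ite
  · exact (measurableSet_lt measurable_const measurable_id).inter
      (measurableSet_lt measurable_id measurable_const)
  · exact ((measurable_const.mul (measurable_id.pow_const _)).mul
      ((measurable_const.sub measurable_id).pow_const _))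
  · exact measurable_const

lemma beta1Dens_nonneg (p q x : ℝ) (hp : 0 < p) (hq : 0 < q) : 0 ≤ beta1Dens p q x := by
  unfold beta1Dens
  split_ifs with h
  · exact mul_nonneg (mul_nonneg (div_nonneg (Real.Gamma_pos_of_pos (by linarith)).le
      (mul_nonneg (Real.Gamma_pos_of_pos hp).le (Real.Gamma_pos_of_pos hq).le))
      (Real.rpow_nonneg h.1.le _)) (Real.rpow_nonneg (by linarith [h.2]) _)
  · exact le_refl 0

lemma key (a a' : ℝ) (ha : 0 < a) (ha' : 0 < a') :
    Measure.map (fun p : ℝ × ℝ => 1/(1+p.1*p.2)) ((beta2 (a+a') a').prod (beta1 a a')) =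
      beta1 a' a := by
  classical
  have hg : Measurable fun p : ℝ × ℝ => 1/(1+p.1*p.2) :=
    measurable_const.div (measurable_const.add (measurable_fst.mul measurable_snd))
  ext A hA
  rw [Measure.map_apply hg hA]
  rw [beta2, beta1, beta1]
  rw [← lintegral_indicator_one (hg hA)]
  have hind : ∀ p : ℝ × ℝ, ((fun p : ℝ × ℝ => 1/(1+p.1*p.2)) ⁻¹' A).indicator
      (1 : ℝ × ℝ → ENNReal) p = A.indicator (1 : ℝ → ENNReal) (1/(1+p.1*p.2)) := by
    intro p
    simp only [Set.indicator]
    exact if_congr Set.mem_preimage rfl rfl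
  rw [lintegral_congr hind]
  rw [lintegral_prod_symm (fun p : ℝ × ℝ => A.indicator 1 (1/(1+p.1*p.2)))
    (((measurable_one.indicator hA).comp hg).aemeasurable)]
  -- unfold inner withDensity
  have hin : ∀ x : ℝ, ∫⁻ w, A.indicator (1 : ℝ → ENNReal) (1/(1+w*x))
        ∂(volume.withDensity fun y => ENNReal.ofReal (beta2Dens (a+a') a' y)) =
      ∫⁻ w, ENNReal.ofReal (beta2Dens (a+a') a' w) *
        A.indicator (1 : ℝ → ENNReal) (1/(1+w*x)) := by
    intro x
    rw [lintegral_withDensity_eq_lintegral_mul_non_measurable _ (beta2Dens_meas _ _)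
      (Filter.Eventually.of_forall fun y => ENNReal.ofReal_lt_top)]
    rfl
  simp only [hin]
  rw [lintegral_withDensity_eq_lintegral_mul_non_measurable _ (beta1Dens_meas _ _)
    (Filter.Eventually.of_forall fun y => ENNReal.ofReal_lt_top)]
  simp only [Pi.mul_apply]
  -- restrict outer integral to Ioo 0 1
  have step1 : ∫⁻ x, ENNReal.ofReal (beta1Dens a a' x) *
        ∫⁻ w, ENNReal.ofReal (beta2Dens (a+a') a' w) *
          A.indicator (1 : ℝ → ENNReal) (1/(1+w*x)) =
      ∫⁻ x in Set.Ioo (0:ℝ) 1, ENNReal.ofReal (beta1Dens a a' x) *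
        ∫⁻ w, ENNReal.ofReal (beta2Dens (a+a') a' w) *
          A.indicator (1 : ℝ → ENNReal) (1/(1+w*x)) := by
    rw [← lintegral_indicator measurableSet_Ioo]
    apply lintegral_congr
    intro x
    rw [Set.indicator_apply]
    split_ifs with h
    · rfl
    · rw [beta1Dens, if_neg (by simpa [Set.mem_Ioo] using h)]
      simp
  rw [step1]
  -- apply aux1 pointwise
  have step2 : ∫⁻ x in Set.Ioo (0:ℝ) 1, ENNReal.ofReal (beta1Dens a a' x) *
        ∫⁻ w, ENNReal.ofReal (beta2Dens (a+a') a' w) *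
          A.indicator (1 : ℝ → ENNReal) (1/(1+w*x)) =
      ∫⁻ x in Set.Ioo (0:ℝ) 1, ∫⁻ v in Set.Ioo (0:ℝ) 1,
        ENNReal.ofReal (beta1Dens a a' x) *
        (ENNReal.ofReal (Real.Gamma (a+a'+a') / (Real.Gamma (a+a') * Real.Gamma a') *
          (1-v)^(a+a'-1) * v^(a'-1) * x^a' * (1-v+v*x)^(-(a+a'+a'))) *
          A.indicator (1 : ℝ → ENNReal) v) := by
    apply setLIntegral_congr_fun measurableSet_Ioo
    intro x hx
    dsimp only
    rw [aux1 a a' x ha ha' hx (A.indicator 1)]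
    rw [← lintegral_const_mul' _ _ ENNReal.ofReal_ne_top]
  rw [step2]
  -- swap
  rw [lintegral_lintegral_swap]
  swap
  · apply AEMeasurable.mul
    · exact ((beta1Dens_meas a a').comp measurable_fst).aemeasurable
    · apply AEMeasurable.mul
      · apply Measurable.aemeasurable
        apply Measurable.ennreal_ofReal
        apply Measurable.mul
        apply Measurable.mul
        apply Measurable.mul
        · exact measurable_const.mul ((measurable_const.sub measurable_snd).pow_const _)
        · exact measurable_snd.pow_const _
        · exact measurable_fst.pow_const _
        · exact ((measurable_const.sub measurable_snd).add
            (measurable_snd.mul measurable_fst)).pow_const _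
      · exact ((measurable_one.indicator hA).comp measurable_snd).aemeasurable
  -- now compute the inner x-integral for fixed v
  have step3 : ∫⁻ v in Set.Ioo (0:ℝ) 1, ∫⁻ x in Set.Ioo (0:ℝ) 1,
        ENNReal.ofReal (beta1Dens a a' x) *
        (ENNReal.ofReal (Real.Gamma (a+a'+a') / (Real.Gamma (a+a') * Real.Gamma a') *
          (1-v)^(a+a'-1) * v^(a'-1) * x^a' * (1-v+v*x)^(-(a+a'+a'))) *
          A.indicator (1 : ℝ → ENNReal) v) =
      ∫⁻ v in Set.Ioo (0:ℝ) 1, A.indicator (1 : ℝ → ENNReal) v *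
        ENNReal.ofReal (Real.Gamma (a+a') / (Real.Gamma a * Real.Gamma a') *
          (Real.Gamma (a+a'+a') / (Real.Gamma (a+a') * Real.Gamma a')) *
          (1-v)^(a+a'-1) * v^(a'-1) *
          ((1-v)^(-a') * (Real.Gamma a' * Real.Gamma (a+a') / Real.Gamma (a' + (a+a'))))) := by
    apply setLIntegral_congr_fun measurableSet_Ioo
    intro v hv
    have h1v : (0:ℝ) ≤ 1 - v := by linarith [hv.2]
    have g1 := Real.Gamma_pos_of_pos ha
    have g2 := Real.Gamma_pos_of_pos ha'
    have g3 := Real.Gamma_pos_of_pos (show (0:ℝ) < a+a' by linarith)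
    have g4 := Real.Gamma_pos_of_pos (show (0:ℝ) < a+a'+a' by linarith)
    have g5 := Real.Gamma_pos_of_pos (show (0:ℝ) < a'+(a+a') by linarith)
    have hGn : (0:ℝ) ≤ Real.Gamma (a+a') / (Real.Gamma a * Real.Gamma a') *
        (Real.Gamma (a+a'+a') / (Real.Gamma (a+a') * Real.Gamma a')) :=
      mul_nonneg (div_nonneg g3.le (mul_nonneg g1.le g2.le))
        (div_nonneg g4.le (mul_nonneg g3.le g2.le))
    have hcnn : (0:ℝ) ≤ Real.Gamma (a+a') / (Real.Gamma a * Real.Gamma a') *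
        (Real.Gamma (a+a'+a') / (Real.Gamma (a+a') * Real.Gamma a')) *
        (1-v)^(a+a'-1) * v^(a'-1) :=
      mul_nonneg (mul_nonneg hGn (Real.rpow_nonneg h1v _))
        (Real.rpow_nonneg hv.1.le _)
    have hAv : A.indicator (1 : ℝ → ENNReal) v ≠ ⊤ := by
      by_cases h : v ∈ A <;> simp [Set.indicator_apply, h]
    calc ∫⁻ x in Set.Ioo (0:ℝ) 1, ENNReal.ofReal (beta1Dens a a' x) *
          (ENNReal.ofReal (Real.Gamma (a+a'+a') / (Real.Gamma (a+a') * Real.Gamma a') *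
            (1-v)^(a+a'-1) * v^(a'-1) * x^a' * (1-v+v*x)^(-(a+a'+a'))) *
            A.indicator (1 : ℝ → ENNReal) v)
        = ∫⁻ x in Set.Ioo (0:ℝ) 1, A.indicator (1 : ℝ → ENNReal) v *
            (ENNReal.ofReal (Real.Gamma (a+a') / (Real.Gamma a * Real.Gamma a') *
              (Real.Gamma (a+a'+a') / (Real.Gamma (a+a') * Real.Gamma a')) *
              (1-v)^(a+a'-1) * v^(a'-1)) *
             ENNReal.ofReal (x^(a+a'-1) * (1-x)^(a'-1) * (1-v+v*x)^(-(a+a'+a')))) := by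
          apply setLIntegral_congr_fun measurableSet_Ioo
          intro x hx
          dsimp only
          conv_lhs => rw [show ∀ α β γ : ENNReal, α * (β * γ) = γ * (α * β) from
            fun α β γ => by ring]
          rw [← ENNReal.ofReal_mul (beta1Dens_nonneg a a' x ha ha'),
            dens3 a a' v x ha ha' hv hx, ENNReal.ofReal_mul hcnn]
      _ = A.indicator (1 : ℝ → ENNReal) v *
            (ENNReal.ofReal (Real.Gamma (a+a') / (Real.Gamma a * Real.Gamma a') *
              (Real.Gamma (a+a'+a') / (Real.Gamma (a+a') * Real.Gamma a')) *
              (1-v)^(a+a'-1) * v^(a'-1)) *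
             ∫⁻ x in Set.Ioo (0:ℝ) 1,
               ENNReal.ofReal (x^(a+a'-1) * (1-x)^(a'-1) * (1-v+v*x)^(-(a+a'+a')))) := by
          rw [lintegral_const_mul' _ _ hAv, lintegral_const_mul' _ _ ENNReal.ofReal_ne_top,
            mul_assoc]
      _ = A.indicator (1 : ℝ → ENNReal) v *
            ENNReal.ofReal (Real.Gamma (a+a') / (Real.Gamma a * Real.Gamma a') *
              (Real.Gamma (a+a'+a') / (Real.Gamma (a+a') * Real.Gamma a')) *
              (1-v)^(a+a'-1) * v^(a'-1) *
              ((1-v)^(-a') * (Real.Gamma a' * Real.Gamma (a+a') / Real.Gamma (a' + (a+a'))))) := by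
          rw [aux2 a a' v hv, betaInt a' (a+a') ha' (by linarith),
            ← ENNReal.ofReal_mul (Real.rpow_nonneg h1v _), ← ENNReal.ofReal_mul hcnn]
  rw [step3]
  -- identify with the beta1 a' a density
  rw [withDensity_apply _ hA, ← lintegral_indicator hA, ← lintegral_indicator measurableSet_Ioo]
  apply lintegral_congr
  intro v
  by_cases hv : v ∈ Set.Ioo (0:ℝ) 1
  · rw [Set.indicator_of_mem hv, dens4 a a' v ha ha' hv]
    by_cases hAv : v ∈ A
    · rw [Set.indicator_of_mem hAv, Set.indicator_of_mem hAv, Pi.one_apply, one_mul]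
    · rw [Set.indicator_of_notMem hAv, Set.indicator_of_notMem hAv, zero_mul]
  · rw [Set.indicator_of_notMem hv]
    by_cases hAv : v ∈ A
    · rw [Set.indicator_of_mem hAv, beta1Dens, if_neg (by simpa [Set.mem_Ioo] using hv)]
      simp
    · rw [Set.indicator_of_notMem hAv]

end Aux

theorem beta_prop_one {Ω : Type*} [MeasurableSpace Ω] (μ : Measure Ω)
    [IsProbabilityMeasure μ] (W' X : Ω → ℝ) (hW' : Measurable W') (hX : Measurable X)
    (a a' : ℝ) (ha : 0 < a) (ha' : 0 < a')
    (hInd : IndepFun W' X μ)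
    (hW'law : μ.map W' = beta2 (a + a') a') (hXlaw : μ.map X = beta1 a a') :
    μ.map (fun ω => 1 / (1 + W' ω * X ω)) = beta1 a' a := by
  have hg : Measurable fun p : ℝ × ℝ => 1/(1+p.1*p.2) :=
    measurable_const.div (measurable_const.add (measurable_fst.mul measurable_snd))
  have h1 : μ.map (fun ω => (W' ω, X ω)) = (beta2 (a+a') a').prod (beta1 a a') := by
    rw [← hW'law, ← hXlaw]
    exact (indepFun_iff_map_prod_eq_prod_map_map hW'.aemeasurable hX.aemeasurable).mp hInd
  have h2 : μ.map (fun ω => 1 / (1 + W' ω * X ω)) =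
      Measure.map (fun p : ℝ × ℝ => 1/(1+p.1*p.2)) ((beta2 (a+a') a').prod (beta1 a a')) := by
    rw [← h1, Measure.map_map hg (hW'.prodMk hX)]
    rfl
  rw [h2, key a a' ha ha']
end

section
/- For a, a', b > 0 with b = a + a', the beta-hypergeometric distribution μ_{a,a',a+a'} equals the Beta distribution of the first kind β¹_{a,a'}. -/
open MeasureTheory ProbabilityTheory Real Set Filter Topology
open scoped NNReal ENNReal

lemma poch_zero (a : ℝ) : poch a 0 = 1 := by simp [poch]

lemma poch_succ (a : ℝ) (n : ℕ) : poch a (n+1) = poch a n * (a + n) := by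
  simp [poch, Finset.prod_range_succ]

lemma poch_pos {a : ℝ} (ha : 0 < a) (n : ℕ) : 0 < poch a n := by
  induction n with
  | zero => simp [poch_zero]
  | succ n ih =>
      rw [poch_succ]
      have h : (0:ℝ) < a + n := by positivity
      positivity

lemma Gamma_add_nat {a : ℝ} (ha : 0 < a) (n : ℕ) :
    Real.Gamma (a + n) = Real.Gamma a * poch a n := by
  induction n with
  | zero => simp [poch_zero]
  | succ n ih =>
      have hpos : (0:ℝ) < a + n := by positivity
      rw [show a + ((n+1 : ℕ) : ℝ) = (a + n) + 1 by push_cast; ring,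
        Real.Gamma_add_one hpos.ne', ih, poch_succ]
      ring

lemma lintegral_ofReal_of_integral {f : ℝ → ℝ} {s : Set ℝ} (hs : MeasurableSet s)
    (hm : Measurable f) (h0 : ∀ x ∈ s, 0 ≤ f x) {V : ℝ} (hV : 0 < V)
    (hval : ∫ x in s, f x = V) :
    ∫⁻ x in s, ENNReal.ofReal (f x) = ENNReal.ofReal V := by
  have hnn : 0 ≤ᵐ[volume.restrict s] f := (ae_restrict_iff' hs).2 (ae_of_all _ h0)
  have h := integral_eq_lintegral_of_nonneg_ae hnn hm.aestronglyMeasurable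
  rw [hval] at h
  have hL : (∫⁻ x in s, ENNReal.ofReal (f x)) ≠ ⊤ := by
    intro ht
    rw [ht, ENNReal.toReal_top] at h
    linarith
  rw [← ENNReal.ofReal_toReal hL, ← h]

lemma hasSum_of_tsum_ofReal {u : ℕ → ℝ} (h0 : ∀ n, 0 ≤ u n) {V : ℝ} (hV : 0 ≤ V)
    (h : ∑' n, ENNReal.ofReal (u n) = ENNReal.ofReal V) : HasSum u V := by
  set g : ℕ → ℝ≥0 := fun n => ⟨u n, h0 n⟩ with hg
  have hcoe : ∀ n, ENNReal.ofReal (u n) = (g n : ℝ≥0∞) := fun n => by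
    rw [ENNReal.ofReal, Real.toNNReal_of_nonneg (h0 n)]; rfl
  simp_rw [hcoe] at h
  have hne : (∑' n, (g n : ℝ≥0∞)) ≠ ⊤ := by rw [h]; exact ENNReal.ofReal_ne_top
  have hsum : Summable g := ENNReal.tsum_coe_ne_top_iff_summable.mp hne
  have h2 : ((∑' n, g n : ℝ≥0) : ℝ≥0∞) = ENNReal.ofReal V := by
    rw [ENNReal.coe_tsum hsum]; exact h
  have h3 : (∑' n, g n : ℝ≥0) = V.toNNReal := by
    rw [ENNReal.ofReal] at h2; exact_mod_cast h2
  have h4 : HasSum (fun n => (g n : ℝ)) ((∑' n, g n : ℝ≥0) : ℝ) :=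
    NNReal.hasSum_coe.mpr hsum.hasSum
  rw [h3, Real.coe_toNNReal _ hV] at h4
  exact h4

lemma integral_Ioo_beta {s u : ℝ} (hs : 0 < s) (hu : 0 < u) :
    ∫ t in Ioo (0:ℝ) 1, t ^ (s-1) * (1-t) ^ (u-1) = Gamma s * Gamma u / Gamma (s+u) := by
  have h1 : ∫ t in Ioo (0:ℝ) 1, t ^ (s-1) * (1-t) ^ (u-1)
      = ∫ t in (0:ℝ)..1, t ^ (s-1) * (1-t) ^ (u-1) := by
    rw [intervalIntegral.integral_of_le zero_le_one, integral_Ioc_eq_integral_Ioo]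
  have h2 : ((∫ t in (0:ℝ)..1, t ^ (s-1) * (1-t) ^ (u-1) : ℝ) : ℂ)
      = Complex.betaIntegral s u := by
    rw [← intervalIntegral.integral_ofReal, Complex.betaIntegral]
    apply intervalIntegral.integral_congr
    intro x hx
    rw [uIcc_of_le (by norm_num : (0:ℝ) ≤ 1)] at hx
    simp only [Complex.ofReal_mul]
    rw [Complex.ofReal_cpow hx.1, Complex.ofReal_cpow (by linarith [hx.2] : (0:ℝ) ≤ 1 - x)]
    push_cast
    ring
  have h3 := Complex.Gamma_mul_Gamma_eq_betaIntegral
      (show 0 < (s:ℂ).re by simpa using hs) (show 0 < (u:ℂ).re by simpa using hu)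
  rw [← h2, show (s:ℂ) + (u:ℂ) = ((s+u : ℝ) : ℂ) by push_cast; ring,
    Complex.Gamma_ofReal, Complex.Gamma_ofReal, Complex.Gamma_ofReal] at h3
  have h5 : Gamma s * Gamma u
      = Gamma (s+u) * ∫ t in (0:ℝ)..1, t ^ (s-1) * (1-t) ^ (u-1) := by exact_mod_cast h3
  have hne : Gamma (s+u) ≠ 0 := (Gamma_pos_of_pos (by linarith)).ne'
  rw [h1, eq_div_iff hne]
  linarith [h5]

lemma integral_gamma_shift {p : ℝ} (hp : 0 < p) :
    ∫ t in Ioi (0:ℝ), t ^ (p - 1) * exp (-t) = Gamma p := by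
  have := integral_rpow_mul_exp_neg_mul_Ioi hp one_pos
  simpa using this

lemma hasSum_binomial {a x : ℝ} (ha : 0 < a) (hx0 : 0 ≤ x) (hx1 : x < 1) :
    HasSum (fun n : ℕ => poch a n / n.factorial * x ^ n) ((1 - x) ^ (-a)) := by
  rcases hx0.eq_or_lt with hx | hx
  · subst hx
    have h := hasSum_single (f := fun n : ℕ => poch a n / n.factorial * (0:ℝ) ^ n) 0
      (fun n hn => by simp [zero_pow hn])
    simpa [poch_zero] using h
  · have h1x : (0:ℝ) < 1 - x := by linarith
    have hΓ : 0 < Gamma a := Gamma_pos_of_pos ha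
    set L : ℕ → ℝ := fun n => poch a n / n.factorial * x ^ n * Gamma a with hL
    have key : ∑' n, ENNReal.ofReal (L n) = ENNReal.ofReal ((1/(1-x)) ^ a * Gamma a) := by
      have step1 : ∀ n : ℕ, ENNReal.ofReal (L n)
          = ∫⁻ t in Ioi (0:ℝ), ENNReal.ofReal
              (x ^ n / n.factorial * (t ^ (a + n - 1) * exp (-t))) := by
        intro n
        have hpos : (0:ℝ) < a + n := by positivity
        have hfac : (0:ℝ) < n.factorial := by exact_mod_cast n.factorial_pos
        have hp := poch_pos ha n
        refine (lintegral_ofReal_of_integral measurableSet_Ioi (by fun_prop)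
          (fun t ht => ?_) ?_ ?_).symm
        · have ht' : (0:ℝ) < t := ht
          positivity
        · simp only [hL]; positivity
        · rw [MeasureTheory.integral_const_mul, integral_gamma_shift hpos,
            Gamma_add_nat ha n]
          simp only [hL]; ring
      calc ∑' n, ENNReal.ofReal (L n)
          = ∑' (n : ℕ), ∫⁻ t in Ioi (0:ℝ), ENNReal.ofReal
              (x ^ n / n.factorial * (t ^ (a + n - 1) * exp (-t))) := tsum_congr step1
        _ = ∫⁻ t in Ioi (0:ℝ), ∑' (n : ℕ), ENNReal.ofReal
              (x ^ n / n.factorial * (t ^ (a + n - 1) * exp (-t))) :=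
            (lintegral_tsum (fun n => (by fun_prop : Measurable _).aemeasurable)).symm
        _ = ∫⁻ t in Ioi (0:ℝ), ENNReal.ofReal (t ^ (a-1) * exp (-((1-x)*t))) := by
            refine setLIntegral_congr_fun measurableSet_Ioi (fun t ht => ?_)
            have ht' : (0:ℝ) < t := ht
            have hterm : ∀ n : ℕ, x ^ n / n.factorial * (t ^ (a + n - 1) * exp (-t))
                = (t ^ (a-1) * exp (-t)) * ((x*t) ^ n / n.factorial) := by
              intro n
              rw [show a + (n:ℝ) - 1 = (a - 1) + (n:ℝ) by ring, rpow_add ht',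
                rpow_natCast, mul_pow]
              ring
            simp_rw [hterm]
            have hsum : Summable (fun n : ℕ => (x*t) ^ n / (n.factorial : ℝ)) :=
              NormedSpace.expSeries_div_summable (x*t)
            have htsum : ∑' n : ℕ, (x*t) ^ n / (n.factorial : ℝ) = exp (x*t) := by
              rw [exp_eq_exp_ℝ, NormedSpace.exp_eq_tsum_div]
            rw [← ENNReal.ofReal_tsum_of_nonneg
              (fun n => by positivity) (hsum.mul_left _), tsum_mul_left, htsum,
              mul_assoc, ← exp_add, show -t + x*t = -((1-x)*t) by ring]
        _ = ENNReal.ofReal ((1/(1-x)) ^ a * Gamma a) := by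
            refine lintegral_ofReal_of_integral measurableSet_Ioi (by fun_prop)
              (fun t ht => ?_) (by positivity) (integral_rpow_mul_exp_neg_mul_Ioi ha h1x)
            have ht' : (0:ℝ) < t := ht
            positivity
    have hLsum : HasSum L ((1/(1-x)) ^ a * Gamma a) := by
      refine hasSum_of_tsum_ofReal (fun n => ?_) (by positivity) key
      have hp := poch_pos ha n
      have hfac : (0:ℝ) < n.factorial := by exact_mod_cast n.factorial_pos
      simp only [hL]; positivity
    have hdiv := hLsum.div_const (Gamma a)
    have heq : ∀ n, L n / Gamma a = poch a n / n.factorial * x ^ n := fun n => by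
      simp only [hL]; field_simp
    have hval : (1/(1-x)) ^ a * Gamma a / Gamma a = (1-x) ^ (-a) := by
      rw [mul_div_assoc, div_self hΓ.ne', mul_one, one_div, Real.inv_rpow h1x.le,
        ← Real.rpow_neg h1x.le]
    simp only [heq] at hdiv
    rw [hval] at hdiv
    exact hdiv

lemma hasSum_gauss {a a' : ℝ} (ha : 0 < a) (ha' : 0 < a') :
    HasSum (fun n : ℕ => poch a n * poch a n / (n.factorial * poch (2*a+a') n))
      (Gamma (2*a+a') * Gamma a' / (Gamma (a+a'))^2) := by
  have hc : (0:ℝ) < 2*a+a' := by linarith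
  have haa' : (0:ℝ) < a+a' := by linarith
  have hΓc := Gamma_pos_of_pos hc
  have hΓa := Gamma_pos_of_pos ha
  have hΓaa := Gamma_pos_of_pos haa'
  have hΓa' := Gamma_pos_of_pos ha'
  set M : ℝ := Gamma a * Gamma (a+a') / Gamma (2*a+a') with hM
  have hMpos : 0 < M := by positivity
  set u : ℕ → ℝ := fun n => poch a n * poch a n / (n.factorial * poch (2*a+a') n) with hu
  have hupos : ∀ n, 0 < u n := fun n => by
    have h1 := poch_pos ha n
    have h2 := poch_pos hc n
    have h3 : (0:ℝ) < n.factorial := by exact_mod_cast n.factorial_pos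
    simp only [hu]; positivity
  have key : ∑' n, ENNReal.ofReal (u n * M)
      = ENNReal.ofReal (Gamma a * Gamma a' / Gamma (a+a')) := by
    have step1 : ∀ n : ℕ, ENNReal.ofReal (u n * M)
        = ∫⁻ t in Ioo (0:ℝ) 1, ENNReal.ofReal
            (poch a n / n.factorial * (t ^ (a + n - 1) * (1-t) ^ (a + a' - 1))) := by
      intro n
      have hpos : (0:ℝ) < a + n := by positivity
      have hfac : (0:ℝ) < n.factorial := by exact_mod_cast n.factorial_pos
      have hp := poch_pos ha n
      have hpc := poch_pos hc n
      refine (lintegral_ofReal_of_integral measurableSet_Ioo (by fun_prop)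
        (fun t ht => ?_) (by positivity) ?_).symm
      · have ht0 : (0:ℝ) < t := ht.1
        have ht1 : (0:ℝ) < 1 - t := by linarith [ht.2]
        positivity
      · rw [MeasureTheory.integral_const_mul, integral_Ioo_beta hpos haa',
          show a + (n:ℝ) + (a+a') = 2*a+a' + n by ring, Gamma_add_nat ha n,
          Gamma_add_nat hc n]
        simp only [hu, hM]
        field_simp
    calc ∑' n, ENNReal.ofReal (u n * M)
        = ∑' (n : ℕ), ∫⁻ t in Ioo (0:ℝ) 1, ENNReal.ofReal
            (poch a n / n.factorial * (t ^ (a + n - 1) * (1-t) ^ (a + a' - 1))) :=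
          tsum_congr step1
      _ = ∫⁻ t in Ioo (0:ℝ) 1, ∑' (n : ℕ), ENNReal.ofReal
            (poch a n / n.factorial * (t ^ (a + n - 1) * (1-t) ^ (a + a' - 1))) :=
          (lintegral_tsum (fun n => (by fun_prop : Measurable _).aemeasurable)).symm
      _ = ∫⁻ t in Ioo (0:ℝ) 1, ENNReal.ofReal (t ^ (a-1) * (1-t) ^ (a'-1)) := by
          refine setLIntegral_congr_fun measurableSet_Ioo (fun t ht => ?_)
          obtain ⟨ht0, ht1⟩ := ht
          have h1t : (0:ℝ) < 1 - t := by linarith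
          have hterm : ∀ n : ℕ, poch a n / n.factorial * (t ^ (a + n - 1) * (1-t) ^ (a + a' - 1))
              = (t ^ (a-1) * (1-t) ^ (a+a'-1)) * (poch a n / n.factorial * t ^ n) := by
            intro n
            rw [show a + (n:ℝ) - 1 = (a - 1) + (n:ℝ) by ring, rpow_add ht0, rpow_natCast]
            ring
          simp_rw [hterm]
          have hmul := (hasSum_binomial ha ht0.le ht1).mul_left (t ^ (a-1) * (1-t) ^ (a+a'-1))
          rw [← ENNReal.ofReal_tsum_of_nonneg (fun n => ?_) hmul.summable, hmul.tsum_eq,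
            mul_assoc, ← rpow_add h1t, show a+a'-1 + -a = a'-1 by ring]
          have hp := poch_pos ha n
          have hfac : (0:ℝ) < n.factorial := by exact_mod_cast n.factorial_pos
          positivity
      _ = ENNReal.ofReal (Gamma a * Gamma a' / Gamma (a+a')) := by
          refine lintegral_ofReal_of_integral measurableSet_Ioo (by fun_prop)
            (fun t ht => ?_) (by positivity) (integral_Ioo_beta ha ha')
          have ht0 : (0:ℝ) < t := ht.1
          have ht1 : (0:ℝ) < 1 - t := by linarith [ht.2]
          positivity
  have hUsum : HasSum (fun n => u n * M) (Gamma a * Gamma a' / Gamma (a+a')) :=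
    hasSum_of_tsum_ofReal (fun n => (mul_pos (hupos n) hMpos).le) (by positivity) key
  have hdiv := hUsum.div_const M
  have heq : ∀ n, u n * M / M = u n := fun n => by field_simp
  have hval : Gamma a * Gamma a' / Gamma (a+a') / M = Gamma (2*a+a') * Gamma a' / (Gamma (a+a'))^2 := by
    simp only [hM]
    field_simp
  simp only [heq] at hdiv
  rw [hval] at hdiv
  exact hdiv

lemma F32one_val {a a' : ℝ} (ha : 0 < a) (ha' : 0 < a') :
    F32one a a (a+a') (a+(a+a')) (a+a')
      = Real.Gamma (2*a+a') * Real.Gamma a' / (Real.Gamma (a+a'))^2 := by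
  have heq : ∀ n : ℕ, poch a n * poch a n * poch (a+a') n /
      ((n.factorial : ℝ) * poch (a+(a+a')) n * poch (a+a') n)
      = poch a n * poch a n / (n.factorial * poch (2*a+a') n) := by
    intro n
    rw [show a+(a+a') = 2*a+a' by ring]
    have h1 := (poch_pos (by linarith : (0:ℝ) < a+a') n).ne'
    have h2 := (poch_pos (by linarith : (0:ℝ) < 2*a+a') n).ne'
    have h3 : (n.factorial : ℝ) ≠ 0 := by exact_mod_cast n.factorial_pos.ne'
    field_simp
  rw [F32one, tsum_congr heq]
  exact (hasSum_gauss ha ha').tsum_eq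

lemma Cbh_val {a a' : ℝ} (ha : 0 < a) (ha' : 0 < a') :
    Cbh a a' (a+a') = Real.Gamma (a+a') / (Real.Gamma a * Real.Gamma a') := by
  rw [Cbh, F32one_val ha ha']
  have h1 := Real.Gamma_pos_of_pos ha
  have h2 := Real.Gamma_pos_of_pos ha'
  have h3 := Real.Gamma_pos_of_pos (show (0:ℝ) < a+a' by linarith)
  have h4 := Real.Gamma_pos_of_pos (show (0:ℝ) < 2*a+a' by linarith)
  rw [show a+(a+a') = 2*a+a' by ring]
  field_simp

theorem bh_eq_beta1 (a a' : ℝ) (ha : 0 < a) (ha' : 0 < a') :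
    bhMeasure a a' (a + a') = beta1 a a' := by
  have hdens : ∀ x : ℝ, bhDens a a' (a+a') x = beta1Dens a a' x := by
    intro x
    unfold bhDens beta1Dens
    by_cases h : 0 < x ∧ x < 1
    · rw [if_pos h, if_pos h, Cbh_val ha ha']
      have hF : F21 a (a+a') (a+a') x = (1-x) ^ (-a) := by
        have heq : ∀ n : ℕ, poch a n * poch (a+a') n / ((n.factorial:ℝ) * poch (a+a') n) * x ^ n
            = poch a n / n.factorial * x ^ n := by
          intro n
          have h1 := (poch_pos (by linarith : (0:ℝ) < a+a') n).ne'
          have h3 : (n.factorial : ℝ) ≠ 0 := by exact_mod_cast n.factorial_pos.ne'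
          field_simp
        rw [F21, tsum_congr heq]
        exact (hasSum_binomial ha h.1.le h.2).tsum_eq
      rw [hF]
      have h1x : (0:ℝ) < 1 - x := by linarith [h.2]
      have hone : (1-x:ℝ) ^ a * (1-x) ^ (-a) = 1 := by
        rw [← Real.rpow_add h1x]
        simp
      rw [show a + a' - 1 = (a' - 1) + a by ring, Real.rpow_add h1x]
      calc Real.Gamma (a+a') / (Real.Gamma a * Real.Gamma a') * x ^ (a-1) *
            ((1-x) ^ (a'-1) * (1-x) ^ a) * (1-x) ^ (-a)
          = Real.Gamma (a+a') / (Real.Gamma a * Real.Gamma a') * x ^ (a-1) *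
            (1-x) ^ (a'-1) * ((1-x) ^ a * (1-x) ^ (-a)) := by ring
        _ = Real.Gamma (a+a') / (Real.Gamma a * Real.Gamma a') * x ^ (a-1) * (1-x) ^ (a'-1) := by
            rw [hone, mul_one]
    · rw [if_neg h, if_neg h]
  unfold bhMeasure beta1
  congr 1
  funext x
  rw [hdens]
end
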